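/- Dimension-free descent: Suppose L is twice differentiable and there is a matrix H with ∇²L(θ') ⪯ H for all θ' on the segment between θ_t and θ_{t+1}, with ||H||_op ≤ l and tr(H) ≤ l·r. If g is a random vector with E[g] = ∇L(θ_t) and E[g g^T] = ((n+1)/n)(∇L ∇L^T + Σ) + (1/n)(||∇L||² + tr(Σ)) I for a PSD matrix Σ, then for θ_{t+1} = θ_t - η g: E[L(θ_{t+1})] - L(θ_t) ≤ -η||∇L(θ_t)||² + (η²/2)·((r+n+1)/n)·l·(||∇L(θ_t)||² + tr(Σ)). -/

import Mathlib

open MeasureTheory Matrix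

open Set

section DimFreeHelpers
lemma key_taylor {d : ℕ} (L : EuclideanSpace ℝ (Fin d) → ℝ) (hL : ContDiff ℝ 2 L)
    (θ v : EuclideanSpace ℝ (Fin d)) (C : ℝ)
    (hC : ∀ θ' ∈ segment ℝ θ (θ + v), iteratedFDeriv ℝ 2 L θ' ![v, v] ≤ C) :
    L (θ + v) ≤ L θ + fderiv ℝ L θ v + C / 2 := by
  set φ : ℝ → ℝ := fun t => L (θ + t • v) with hφdef
  have hdiff : Differentiable ℝ L := hL.differentiable (by norm_num)
  have hc : ∀ t : ℝ, HasDerivAt (fun s : ℝ => θ + s • v) v t := fun t => by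
    simpa using ((hasDerivAt_id t).smul_const v).const_add θ
  have hφ' : ∀ t, HasDerivAt φ (fderiv ℝ L (θ + t • v) v) t := fun t =>
    ((hdiff _).hasFDerivAt).comp_hasDerivAt t (hc t)
  have hD : ContDiff ℝ 1 (fderiv ℝ L) := hL.fderiv_right (by norm_num)
  have hψ : ∀ t : ℝ, HasDerivAt (fun s => fderiv ℝ L (θ + s • v) v)
      (iteratedFDeriv ℝ 2 L (θ + t • v) ![v, v]) t := by
    intro t
    have h1 : HasFDerivAt (fderiv ℝ L) (fderiv ℝ (fderiv ℝ L) (θ + t • v)) (θ + t • v) :=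
      ((hD.differentiable one_ne_zero) _).hasFDerivAt
    have h2 := h1.comp_hasDerivAt t (hc t)
    have h3 := h2.clm_apply (hasDerivAt_const t v)
    rw [iteratedFDeriv_two_apply]
    simpa using h3
  have hφC2 : ContDiff ℝ 2 φ :=
    hL.comp (contDiff_const.add (contDiff_id.smul contDiff_const))
  have hu : UniqueDiffOn ℝ (Icc (0:ℝ) 1) := uniqueDiffOn_Icc one_pos
  have hone : ∀ y ∈ Icc (0:ℝ) 1,
      iteratedDerivWithin 1 φ (Icc 0 1) y = fderiv ℝ L (θ + y • v) v := by
    intro y hy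
    rw [iteratedDerivWithin_one]
    exact ((hφ' y).hasDerivWithinAt).derivWithin (hu y hy)
  obtain ⟨x', hx', heq⟩ := taylor_mean_remainder_lagrange (n := 1) (by norm_num : (0:ℝ) ≠ 1)
    ((hφC2.of_le one_le_two).contDiffOn)
    (by rw [uIcc_of_le zero_le_one, uIoo_of_le zero_le_one]; exact fun y hy => (((hψ y).differentiableAt).differentiableWithinAt).congr (fun z hz => hone z (Ioo_subset_Icc_self hz)) (hone y (Ioo_subset_Icc_self hy)))
  rw [uIoo_of_le zero_le_one] at hx'
  rw [uIcc_of_le zero_le_one] at heq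
  have hx'i : x' ∈ Icc (0:ℝ) 1 := Ioo_subset_Icc_self hx'
  have htay : taylorWithinEval φ 1 (Icc 0 1) 0 1 = φ 0 + fderiv ℝ L θ v := by
    rw [show (1:ℕ) = 0 + 1 from rfl, taylorWithinEval_succ, taylor_within_zero_eval,
      hone 0 (by constructor <;> norm_num)]
    simp
  have h2 : iteratedDerivWithin 2 φ (Icc 0 1) x'
      = iteratedFDeriv ℝ 2 L (θ + x' • v) ![v, v] := by
    show iteratedDerivWithin (1+1) φ (Icc 0 1) x' = _
    rw [iteratedDerivWithin_succ, derivWithin_congr hone (hone x' hx'i)]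
    exact ((hψ x').hasDerivWithinAt).derivWithin (hu x' hx'i)
  have hmem : θ + x' • v ∈ segment ℝ θ (θ + v) := by
    rw [segment_eq_image']
    exact ⟨x', hx'i, by simp⟩
  have hbound := hC _ hmem
  rw [h2] at heq
  have hφ1 : φ 1 = L (θ + v) := by simp [hφdef]
  have hφ0 : φ 0 = L θ := by simp [hφdef]
  rw [htay, hφ1, hφ0] at heq
  have : L (θ + v) = L θ + fderiv ℝ L θ v
      + iteratedFDeriv ℝ 2 L (θ + x' • v) ![v, v] / 2 := by
    rw [eq_comm] at heq ⊢
    norm_num at heq ⊢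
    linarith [heq]
  rw [this]
  linarith [hbound]

lemma cs_quad {d : ℕ} {H : Matrix (Fin d) (Fin d) ℝ} {l : ℝ} (hl : 0 ≤ l)
    (hHop : ∀ w : Fin d → ℝ, H.mulVec w ⬝ᵥ H.mulVec w ≤ l ^ 2 * (w ⬝ᵥ w))
    (w : Fin d → ℝ) : w ⬝ᵥ H.mulVec w ≤ l * (w ⬝ᵥ w) := by
  have hww : (0:ℝ) ≤ w ⬝ᵥ w := by
    simp only [dotProduct, ← sq]
    positivity
  have hcs : (w ⬝ᵥ H.mulVec w) ^ 2 ≤ (w ⬝ᵥ w) * (H.mulVec w ⬝ᵥ H.mulVec w) := by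
    simpa only [dotProduct, ← sq] using
      Finset.sum_mul_sq_le_sq_mul_sq Finset.univ w (H.mulVec w)
  nlinarith [hHop w, sq_nonneg (w ⬝ᵥ H.mulVec w), mul_nonneg hl hww,
    mul_nonneg hww hww, sq_nonneg (w ⬝ᵥ H.mulVec w - l * (w ⬝ᵥ w))]

open scoped MatrixOrder in
lemma trace_bound {d : ℕ} {H Sig : Matrix (Fin d) (Fin d) ℝ} {l : ℝ} (hl : 0 ≤ l)
    (hHop : ∀ w : Fin d → ℝ, H.mulVec w ⬝ᵥ H.mulVec w ≤ l ^ 2 * (w ⬝ᵥ w))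
    (hSig : Sig.PosSemidef) : (H * Sig).trace ≤ l * Sig.trace := by
  set S := CFC.sqrt Sig with hS
  have hSsym : Sᵀ = S := by
    have : S.IsHermitian := (CFC.sqrt_nonneg Sig).isSelfAdjoint
    simpa [Matrix.IsHermitian, Matrix.conjTranspose_eq_transpose_of_trivial] using this
  have hSS : S * S = Sig := CFC.sqrt_mul_sqrt_self _ hSig.nonneg
  have hsym : ∀ a b, S b a = S a b := fun a b => by
    simpa [Matrix.transpose_apply] using congrFun (congrFun hSsym a) b
  have h1 : (H * Sig).trace = (S * H * S).trace := by
    rw [← hSS, ← mul_assoc, trace_mul_comm (H * S) S, mul_assoc]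
  have h2 : (S * H * S).trace = ∑ i, (fun j => S i j) ⬝ᵥ H.mulVec (fun j => S i j) := by
    rw [Matrix.trace]
    congr 1; ext i
    simp only [Matrix.diag, Matrix.mul_apply, dotProduct, Matrix.mulVec, dotProduct,
      Finset.sum_mul, Finset.mul_sum]
    rw [Finset.sum_comm]
    refine Finset.sum_congr rfl fun j _ => Finset.sum_congr rfl fun k _ => ?_
    rw [hsym i k]; ring
  have h3 : Sig.trace = ∑ i, (fun j => S i j) ⬝ᵥ (fun j => S i j) := by
    rw [← hSS, Matrix.trace]
    congr 1; ext i
    simp only [Matrix.diag, Matrix.mul_apply, dotProduct]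
    refine Finset.sum_congr rfl fun j _ => ?_
    rw [hsym i j]
  rw [h1, h2, h3, Finset.mul_sum]
  exact Finset.sum_le_sum fun i _ => cs_quad hl hHop _

lemma trace_nonneg' {d : ℕ} {Sig : Matrix (Fin d) (Fin d) ℝ} (hSig : Sig.PosSemidef) :
    0 ≤ Sig.trace := by
  rw [Matrix.trace]
  refine Finset.sum_nonneg fun i _ => ?_
  have := hSig.diag_nonneg (i := i)
  simpa [dotProduct, Matrix.mulVec, Pi.single_apply, Matrix.diag] using this
end DimFreeHelpers

/-- Dimension-free descent: if the Hessian of `L` on the segment between iterates is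
bounded above by a matrix `H` with `‖H‖_op ≤ l` and `tr H ≤ l·r`, and `g` is a random
vector with `E[g] = ∇L(θ)` and second moment
`E[g gᵀ] = ((n+1)/n)(∇L ∇Lᵀ + Σ) + (1/n)(‖∇L‖² + tr Σ) I` for a PSD matrix `Σ`,
then the step `θ' = θ - η g` satisfies
`E[L(θ')] - L(θ) ≤ -η ‖∇L(θ)‖² + (η²/2)((r+n+1)/n) l (‖∇L(θ)‖² + tr Σ)`. -/
theorem stmt10 {d : ℕ} {Ω : Type*} [MeasurableSpace Ω] (P : Measure Ω)
    [IsProbabilityMeasure P]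
    (L : EuclideanSpace ℝ (Fin d) → ℝ) (hL : ContDiff ℝ 2 L)
    (l r η : ℝ) (hl : 0 ≤ l) (hη : 0 ≤ η) (n : ℕ) (hn : 0 < n)
    (θ : EuclideanSpace ℝ (Fin d)) (g : Ω → EuclideanSpace ℝ (Fin d))
    (H Sig : Matrix (Fin d) (Fin d) ℝ) (hSig : Sig.PosSemidef)
    (hHub : ∀ ω, ∀ θ' ∈ segment ℝ θ (θ - η • g ω), ∀ w : EuclideanSpace ℝ (Fin d),
      iteratedFDeriv ℝ 2 L θ' ![w, w] ≤ (fun k => w k) ⬝ᵥ H.mulVec fun k => w k)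
    (hHop : ∀ w : Fin d → ℝ, H.mulVec w ⬝ᵥ H.mulVec w ≤ l ^ 2 * (w ⬝ᵥ w))
    (hHtr : H.trace ≤ l * r)
    (hgint : Integrable g P)
    (hg2 : Integrable (fun ω => ‖g ω‖ ^ 2) P)
    (hLint : Integrable (fun ω => L (θ - η • g ω)) P)
    (hmean : (∫ ω, g ω ∂P) = gradient L θ)
    (hsecond : (Matrix.of fun i j => ∫ ω, g ω i * g ω j ∂P) =
      (((n : ℝ) + 1) / n) •
          (vecMulVec (fun k => gradient L θ k) (fun k => gradient L θ k) + Sig) +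
        ((1 / (n : ℝ)) * (‖gradient L θ‖ ^ 2 + Sig.trace)) •
          (1 : Matrix (Fin d) (Fin d) ℝ)) :
    (∫ ω, L (θ - η • g ω) ∂P) - L θ ≤
      -η * ‖gradient L θ‖ ^ 2 +
        η ^ 2 / 2 * ((r + n + 1) / n) * l * (‖gradient L θ‖ ^ 2 + Sig.trace) := by
  set G := gradient L θ with hG
  set vG : Fin d → ℝ := fun k => G k with hvG
  set q : Ω → ℝ := fun ω => (fun k => g ω k) ⬝ᵥ H.mulVec (fun k => g ω k) with hq
  set a : ℝ := ((n : ℝ) + 1) / n with ha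
  set b : ℝ := (1 / (n : ℝ)) * (‖G‖ ^ 2 + Sig.trace) with hb
  have hn' : (0:ℝ) < n := Nat.cast_pos.mpr hn
  -- gradient/fderiv correspondence
  have hgrad : ∀ x : EuclideanSpace ℝ (Fin d),
      (fderiv ℝ L θ) x = @inner ℝ _ _ G x := fun x =>
    (InnerProductSpace.toDual_symm_apply (𝕜 := ℝ)).symm
  -- pointwise Taylor bound
  have hpt : ∀ ω, L (θ - η • g ω) ≤
      L θ + (-η * @inner ℝ _ _ G (g ω)) + (η ^ 2 * q ω) / 2 := by
    intro ω
    have hvk : (fun k => (-(η • g ω)) k) = (-η) • (fun k => g ω k) := by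
      funext k
      simp [smul_eq_mul]
    have hqv : (fun k => (-(η • g ω)) k) ⬝ᵥ H.mulVec (fun k => (-(η • g ω)) k)
        = η ^ 2 * q ω := by
      rw [hvk, smul_dotProduct, Matrix.mulVec_smul, dotProduct_smul]
      simp [hq, smul_eq_mul]
      ring
    have hC : ∀ θ' ∈ segment ℝ θ (θ + -(η • g ω)),
        iteratedFDeriv ℝ 2 L θ' ![-(η • g ω), -(η • g ω)] ≤ η ^ 2 * q ω := by
      intro θ' hθ'
      rw [← sub_eq_add_neg] at hθ'
      exact (hHub ω θ' hθ' (-(η • g ω))).trans_eq hqv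
    have := key_taylor L hL θ (-(η • g ω)) (η ^ 2 * q ω) hC
    rw [← sub_eq_add_neg] at this
    refine this.trans_eq ?_
    rw [hgrad]
    rw [inner_neg_right, real_inner_smul_right]
    ring_nf
  -- integrability pieces
  have hinner_int : Integrable (fun ω => @inner ℝ _ _ G (g ω)) P :=
    (innerSL ℝ G).integrable_comp hgint
  have hinner_eq : (∫ ω, @inner ℝ _ _ G (g ω) ∂P) = ‖G‖ ^ 2 := by
    have h := (innerSL ℝ G).integral_comp_comm hgint
    simp only [innerSL_apply_apply] at h
    rw [h, hmean, real_inner_self_eq_norm_sq]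
  have hmi : ∀ i : Fin d, AEStronglyMeasurable (fun ω => g ω i) P := fun i =>
    (EuclideanSpace.proj (𝕜 := ℝ) i).continuous.comp_aestronglyMeasurable hgint.1
  have habs : ∀ (x : EuclideanSpace ℝ (Fin d)) (i : Fin d), |x i| ≤ ‖x‖ := by
    intro x i
    rw [EuclideanSpace.norm_eq]
    have h1 : |x i| ^ 2 ≤ ∑ j, ‖x j‖ ^ 2 := by
      have := Finset.single_le_sum (f := fun j => ‖x j‖ ^ 2)
        (fun j _ => sq_nonneg _) (Finset.mem_univ i)
      simpa [Real.norm_eq_abs, sq_abs] using this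
    calc |x i| = Real.sqrt (|x i| ^ 2) := (Real.sqrt_sq (abs_nonneg _)).symm
      _ ≤ Real.sqrt (∑ j, ‖x j‖ ^ 2) := Real.sqrt_le_sqrt h1
  have hmij : ∀ i j : Fin d, Integrable (fun ω => g ω i * g ω j) P := by
    intro i j
    refine hg2.mono' ((hmi i).mul (hmi j)) ?_
    filter_upwards with ω
    have h1 := habs (g ω) i
    have h2 := habs (g ω) j
    have h0 : (0:ℝ) ≤ ‖g ω‖ := norm_nonneg _
    rw [Real.norm_eq_abs, abs_mul]
    calc |g ω i| * |g ω j| ≤ ‖g ω‖ * ‖g ω‖ :=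
          mul_le_mul h1 h2 (abs_nonneg _) h0
      _ = ‖g ω‖ ^ 2 := (sq ‖g ω‖).symm
  -- q as a double sum
  have hq_eq : ∀ ω, q ω = ∑ i, ∑ j, H i j * (g ω i * g ω j) := by
    intro ω
    simp only [hq, dotProduct, Matrix.mulVec, dotProduct, Finset.mul_sum]
    exact Finset.sum_congr rfl fun i _ => Finset.sum_congr rfl fun j _ => by ring
  have hqint : Integrable q P := by
    have : Integrable (fun ω => ∑ i, ∑ j, H i j * (g ω i * g ω j)) P :=
      integrable_finset_sum _ fun i _ => integrable_finset_sum _ fun j _ =>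
        (hmij i j).const_mul (H i j)
    exact this.congr (by filter_upwards with ω using (hq_eq ω).symm)
  -- second moment entries
  have hM : ∀ i j : Fin d, (∫ ω, g ω i * g ω j ∂P)
      = a * (vG i * vG j) + a * Sig i j + b * (1 : Matrix (Fin d) (Fin d) ℝ) i j := by
    intro i j
    have h := congrFun (congrFun hsecond i) j
    simpa [Matrix.add_apply, Matrix.smul_apply, vecMulVec_apply, smul_eq_mul,
      ← hG, ← ha, ← hb, ← hvG] using h
  -- integral of q
  have hSigsym : ∀ i j, Sig j i = Sig i j := fun i j => by
    have := congrFun (congrFun hSig.1 i) j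
    simpa [Matrix.conjTranspose_apply] using this
  have hqval : (∫ ω, q ω ∂P)
      = a * (vG ⬝ᵥ H.mulVec vG) + a * (H * Sig).trace + b * H.trace := by
    have h1 : (∫ ω, q ω ∂P) = ∑ i, ∑ j, H i j * (∫ ω, g ω i * g ω j ∂P) := by
      rw [integral_congr_ae (Filter.Eventually.of_forall hq_eq),
        integral_finset_sum _ fun i _ => integrable_finset_sum _ fun j _ =>
          (hmij i j).const_mul (H i j)]
      exact Finset.sum_congr rfl fun i _ => by
        rw [integral_finset_sum _ fun j _ => (hmij i j).const_mul (H i j)]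
        exact Finset.sum_congr rfl fun j _ => integral_const_mul _ _
    have e1 : ∑ i, ∑ j, H i j * (vG i * vG j) = vG ⬝ᵥ H.mulVec vG := by
      simp only [dotProduct, Matrix.mulVec, dotProduct, Finset.mul_sum]
      exact Finset.sum_congr rfl fun i _ => Finset.sum_congr rfl fun j _ => by ring
    have e2 : ∑ i, ∑ j, H i j * Sig i j = (H * Sig).trace := by
      rw [Matrix.trace]
      refine Finset.sum_congr rfl fun i _ => ?_
      simp only [Matrix.diag, Matrix.mul_apply]
      exact Finset.sum_congr rfl fun j _ => by rw [hSigsym i j]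
    have e3 : ∑ i, ∑ j, H i j * (1 : Matrix (Fin d) (Fin d) ℝ) i j = H.trace := by
      simp [Matrix.one_apply, mul_ite, Matrix.trace, Matrix.diag]
    rw [h1]
    simp only [hM]
    have expand : ∑ i, ∑ j, (H i j * (a * (vG i * vG j) + a * Sig i j
          + b * (1 : Matrix (Fin d) (Fin d) ℝ) i j))
        = a * (∑ i, ∑ j, H i j * (vG i * vG j)) + a * (∑ i, ∑ j, H i j * Sig i j)
          + b * (∑ i, ∑ j, H i j * (1 : Matrix (Fin d) (Fin d) ℝ) i j) := by
      simp only [Finset.mul_sum, ← Finset.sum_add_distrib]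
      exact Finset.sum_congr rfl fun i _ => Finset.sum_congr rfl fun j _ => by ring
    rw [expand, e1, e2, e3]
  -- put it together
  have hrhs_int : Integrable
      (fun ω => L θ + -η * @inner ℝ _ _ G (g ω) + η ^ 2 * q ω / 2) P :=
    ((integrable_const _).add (hinner_int.const_mul (-η))).add
      ((hqint.const_mul (η ^ 2)).div_const 2)
  have hIle : (∫ ω, L (θ - η • g ω) ∂P) ≤
      ∫ ω, (L θ + -η * @inner ℝ _ _ G (g ω) + η ^ 2 * q ω / 2) ∂P :=
    integral_mono hLint hrhs_int hpt
  have i1 : Integrable (fun ω => L θ + -η * @inner ℝ _ _ G (g ω)) P :=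
    (integrable_const _).add (hinner_int.const_mul (-η))
  have i2 : Integrable (fun ω => η ^ 2 * q ω / 2) P :=
    (hqint.const_mul (η ^ 2)).div_const 2
  have hIval : (∫ ω, (L θ + -η * @inner ℝ _ _ G (g ω) + η ^ 2 * q ω / 2) ∂P)
      = L θ + -η * ‖G‖ ^ 2 + η ^ 2 * (∫ ω, q ω ∂P) / 2 := by
    have e4 : (∫ ω, (L θ + -η * @inner ℝ _ _ G (g ω) + η ^ 2 * q ω / 2) ∂P)
        = (∫ ω, (L θ + -η * @inner ℝ _ _ G (g ω)) ∂P) + ∫ ω, η ^ 2 * q ω / 2 ∂P :=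
      integral_add i1 i2
    have e5 : (∫ ω, (L θ + -η * @inner ℝ _ _ G (g ω)) ∂P) = L θ + -η * ‖G‖ ^ 2 := by
      rw [integral_add (integrable_const _) (hinner_int.const_mul (-η)),
        integral_const, integral_const_mul, hinner_eq]
      simp
    have e6 : (∫ ω, η ^ 2 * q ω / 2 ∂P) = η ^ 2 * (∫ ω, q ω ∂P) / 2 := by
      rw [integral_div, integral_const_mul]
    rw [e4, e5, e6]
  have hnormsq : vG ⬝ᵥ vG = ‖G‖ ^ 2 := by
    rw [← real_inner_self_eq_norm_sq]
    simp [dotProduct, PiLp.inner_apply, RCLike.inner_apply]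
    rw [EuclideanSpace.norm_eq, Real.sq_sqrt (Finset.sum_nonneg fun i _ => sq_nonneg _)]
    simp [hvG, sq]
  have htrS : 0 ≤ Sig.trace := trace_nonneg' hSig
  have hbnn : 0 ≤ b := by
    rw [hb]
    exact mul_nonneg (by positivity) (add_nonneg (sq_nonneg _) htrS)
  have hann : 0 ≤ a := by rw [ha]; positivity
  have hTb : (∫ ω, q ω ∂P) ≤ ((r + n + 1) / n) * l * (‖G‖ ^ 2 + Sig.trace) := by
    rw [hqval]
    have h1 : vG ⬝ᵥ H.mulVec vG ≤ l * ‖G‖ ^ 2 := by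
      rw [← hnormsq]; exact cs_quad hl hHop vG
    have h2 : (H * Sig).trace ≤ l * Sig.trace := trace_bound hl hHop hSig
    calc a * (vG ⬝ᵥ H.mulVec vG) + a * (H * Sig).trace + b * H.trace
        ≤ a * (l * ‖G‖ ^ 2) + a * (l * Sig.trace) + b * (l * r) := by gcongr
      _ = ((r + n + 1) / n) * l * (‖G‖ ^ 2 + Sig.trace) := by
          rw [ha, hb]; field_simp; ring
  have hfin : η ^ 2 * (∫ ω, q ω ∂P) / 2
      ≤ η ^ 2 / 2 * (((r + n + 1) / n) * l * (‖G‖ ^ 2 + Sig.trace)) :=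
    calc η ^ 2 * (∫ ω, q ω ∂P) / 2 = η ^ 2 / 2 * (∫ ω, q ω ∂P) := by ring
      _ ≤ _ := mul_le_mul_of_nonneg_left hTb (by positivity)
  rw [hIval] at hIle
  have goal_eq : η ^ 2 / 2 * ((r + ↑n + 1) / ↑n) * l * (‖G‖ ^ 2 + Sig.trace)
      = η ^ 2 / 2 * (((r + n + 1) / n) * l * (‖G‖ ^ 2 + Sig.trace)) := by ring
  rw [goal_eq]
  linarith
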